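/- For every event-driven program 𝒫 and every execution ρ of 𝒫, the induced trace τ(ρ) is axiomatically consistent; that is, the relation po ∪ rf ∪ fr ∪ co ∪ pb ∪ mo ∪ eo† ∪ qo of τ(ρ) is acyclic. -/

import Mathlib

/-!
Common framework for event-driven (ED) traces.

Handlers, shared variables and values are modelled as natural numbers;
events are (abstract) natural-number identifiers carrying a label.
-/

/-- Labels of events of event-driven programs: a read `⟨h,read,x⟩`, a write
`⟨h,write,x,v⟩`, a post `⟨h,post,h′⟩` or a get `⟨h,get⟩` of a handler `h`. -/
inductive EventLabel : Type where
  | read  (h x : ℕ)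
  | write (h x v : ℕ)
  | post  (h h' : ℕ)
  | get   (h : ℕ)
deriving DecidableEq

/-- The six basic relations of an ED trace. -/
inductive EDRel : Type where
  | po | rf | co | pb | mo | eo
deriving DecidableEq

/-- The handler of an event. -/
def EventLabel.hnd : EventLabel → ℕ
  | .read h _    => h
  | .write h _ _ => h
  | .post h _    => h
  | .get h       => h

def EventLabel.IsGet (l : EventLabel) : Prop := ∃ h, l = .get h
def EventLabel.IsPost (l : EventLabel) : Prop := ∃ h h', l = .post h h'
/-- `l` is a write event on variable `x`. -/
def EventLabel.IsWriteTo (l : EventLabel) (x : ℕ) : Prop := ∃ h v, l = .write h x v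
/-- `l` is a read event on variable `x`. -/
def EventLabel.IsReadOf (l : EventLabel) (x : ℕ) : Prop := ∃ h, l = .read h x
/-- `l` is a post event posting to handler `h'`. -/
def EventLabel.PostsTo (l : EventLabel) (h' : ℕ) : Prop := ∃ h, l = .post h h'

/-- An event-driven trace: a finite set `E` of events (natural-number
identifiers), a labelling of events, and a family of labelled edges. -/
structure EDTrace : Type where
  E : Finset ℕ
  lbl : ℕ → EventLabel
  rel : EDRel → ℕ → ℕ → Prop

namespace EDTrace

/-- The from-read relation `fr = rf⁻¹ ; co`. -/
def fr (τ : EDTrace) (a b : ℕ) : Prop := ∃ w, τ.rel .rf w a ∧ τ.rel .co w b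

/-- The queue order `qo = pb⁻¹ ; mo ; pb` on get events. -/
def qo (τ : EDTrace) (a b : ℕ) : Prop :=
  ∃ p q, τ.rel .pb p a ∧ τ.rel .pb q b ∧ τ.rel .mo p q

/-- `e` belongs to the (non-initial) message whose get event is `g`:
`g` is a get event and `e` is po-reachable from `g`. -/
def InMsg (τ : EDTrace) (g e : ℕ) : Prop :=
  (τ.lbl g).IsGet ∧ Relation.ReflTransGen (τ.rel .po) g e

/-- `eo†`: every event of a message is related to every event of an
eo-later message of the same handler. -/
def eoDag (τ : EDTrace) (a b : ℕ) : Prop :=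
  ∃ g g', τ.InMsg g a ∧ τ.InMsg g' b ∧ τ.rel .eo g g'

/-- One step of the happens-before relation:
`po ∪ rf ∪ fr ∪ co ∪ pb ∪ mo ∪ eo† ∪ qo`. -/
def step (τ : EDTrace) (a b : ℕ) : Prop :=
  τ.rel .po a b ∨ τ.rel .rf a b ∨ τ.fr a b ∨ τ.rel .co a b ∨
  τ.rel .pb a b ∨ τ.rel .mo a b ∨ τ.eoDag a b ∨ τ.qo a b

/-- The happens-before relation: transitive closure of
`po ∪ rf ∪ fr ∪ co ∪ pb ∪ mo ∪ eo† ∪ qo`. -/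
def hb (τ : EDTrace) : ℕ → ℕ → Prop := Relation.TransGen τ.step

/-- Axiomatic consistency: acyclicity of `po ∪ rf ∪ fr ∪ co ∪ pb ∪ mo ∪ eo† ∪ qo`. -/
def Consistent (τ : EDTrace) : Prop := ∀ e, ¬ τ.hb e e

/-- `e` belongs to the initial message of its handler: it belongs to no
message started by a get event. -/
def InInit (τ : EDTrace) (e : ℕ) : Prop :=
  e ∈ τ.E ∧ ¬ ∃ g ∈ τ.E, τ.InMsg g e

/-- Two events belong to the same message (either the message of a common
get event, or both to the initial message of the same handler). -/
def SameMsg (τ : EDTrace) (a b : ℕ) : Prop :=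
  (∃ g ∈ τ.E, τ.InMsg g a ∧ τ.InMsg g b) ∨
  (τ.InInit a ∧ τ.InInit b ∧ (τ.lbl a).hnd = (τ.lbl b).hnd)

/-- Well-formedness of the `po, rf, co, pb` components of a trace. -/
structure WFCore (τ : EDTrace) : Prop where
  edges_mem : ∀ r a b, τ.rel r a b → a ∈ τ.E ∧ b ∈ τ.E
  po_trans : Transitive (τ.rel .po)
  po_irrefl : ∀ a, ¬ τ.rel .po a a
  po_same_handler : ∀ a b, τ.rel .po a b → (τ.lbl a).hnd = (τ.lbl b).hnd
  po_msg : ∀ a b, τ.rel .po a b → τ.SameMsg a b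
  po_total : ∀ a ∈ τ.E, ∀ b ∈ τ.E, τ.SameMsg a b → a ≠ b →
    τ.rel .po a b ∨ τ.rel .po b a
  rf_lbl : ∀ a b, τ.rel .rf a b → ∃ x, (τ.lbl a).IsWriteTo x ∧ (τ.lbl b).IsReadOf x
  rf_unique : ∀ b ∈ τ.E, (∃ x, (τ.lbl b).IsReadOf x) → ∃! a, τ.rel .rf a b
  co_lbl : ∀ a b, τ.rel .co a b → ∃ x, (τ.lbl a).IsWriteTo x ∧ (τ.lbl b).IsWriteTo x
  co_trans : Transitive (τ.rel .co)
  co_irrefl : ∀ a, ¬ τ.rel .co a a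
  co_total : ∀ x, ∀ a ∈ τ.E, ∀ b ∈ τ.E, (τ.lbl a).IsWriteTo x → (τ.lbl b).IsWriteTo x →
    a ≠ b → τ.rel .co a b ∨ τ.rel .co b a
  pb_lbl : ∀ a b, τ.rel .pb a b → ∃ h h', τ.lbl a = .post h h' ∧ τ.lbl b = .get h'
  pb_get : ∀ b ∈ τ.E, (τ.lbl b).IsGet → ∃! a, τ.rel .pb a b
  pb_post : ∀ a ∈ τ.E, (τ.lbl a).IsPost → ∃! b, τ.rel .pb a b

/-- Well-formedness of a (total) ED trace: additionally `mo` totally orders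
the posts to each handler and `eo` totally orders the gets of each handler. -/
structure WF (τ : EDTrace) extends WFCore τ : Prop where
  mo_lbl : ∀ a b, τ.rel .mo a b → ∃ h', (τ.lbl a).PostsTo h' ∧ (τ.lbl b).PostsTo h'
  mo_trans : Transitive (τ.rel .mo)
  mo_irrefl : ∀ a, ¬ τ.rel .mo a a
  mo_total : ∀ h', ∀ a ∈ τ.E, ∀ b ∈ τ.E, (τ.lbl a).PostsTo h' → (τ.lbl b).PostsTo h' →
    a ≠ b → τ.rel .mo a b ∨ τ.rel .mo b a
  eo_lbl : ∀ a b, τ.rel .eo a b → ∃ h, τ.lbl a = .get h ∧ τ.lbl b = .get h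
  eo_trans : Transitive (τ.rel .eo)
  eo_irrefl : ∀ a, ¬ τ.rel .eo a a
  eo_total : ∀ h, ∀ a ∈ τ.E, ∀ b ∈ τ.E, τ.lbl a = .get h → τ.lbl b = .get h →
    a ≠ b → τ.rel .eo a b ∨ τ.rel .eo b a

/-- A partial trace: the `eo` and `mo` components are omitted (empty). -/
def IsPartial (τ : EDTrace) : Prop :=
  (∀ a b, ¬ τ.rel .eo a b) ∧ (∀ a b, ¬ τ.rel .mo a b)

/-- `τ'` extends the (partial) trace `τ`: same events, labels and
`po, rf, co, pb` edges; only `eo` and `mo` may be added. -/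
def Extends (τ' τ : EDTrace) : Prop :=
  τ'.E = τ.E ∧ τ'.lbl = τ.lbl ∧ τ'.rel .po = τ.rel .po ∧ τ'.rel .rf = τ.rel .rf ∧
  τ'.rel .co = τ.rel .co ∧ τ'.rel .pb = τ.rel .pb

/-- ED-consistency of a partial trace: it can be extended, by adding `eo`
edges (total per handler) and `mo` edges (total per target handler), to a
well-formed axiomatically consistent trace. -/
def EDConsistent (τ : EDTrace) : Prop :=
  ∃ τ' : EDTrace, Extends τ' τ ∧ τ'.WF ∧ τ'.Consistent

end EDTrace
/-!
Operational semantics of event-driven programs: handler threads with FIFO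
mailboxes, shared variables under sequential consistency, and messages whose
instructions are executed sequentially; `post` enqueues a message at the tail
of the target handler's mailbox, `get` dequeues the message at the head.
-/

/-- Instructions of a message: reads and writes of shared variables, and
posting of a (nested) message to a handler's mailbox. -/
inductive Instr : Type where
  | read  (x : ℕ)
  | write (x v : ℕ)
  | post  (h' : ℕ) (m : List Instr)

/-- A message is a sequence of instructions. -/
abbrev Msg := List Instr

/-- An event-driven program: finitely many handler threads, each with an
initial message. -/
structure Program : Type where
  numHandlers : ℕ
  init : ℕ → Msg

/-- A configuration: shared memory, per handler the currently executing
message (its identifier and remaining instructions), the FIFO mailbox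
(head = front of the queue) and a supply of fresh message identifiers. -/
structure Config : Type where
  mem  : ℕ → ℕ
  cur  : ℕ → Option (ℕ × Msg)
  mbox : ℕ → List (ℕ × Msg)
  fresh : ℕ

/-- A run event: its label together with the identifier of the message it
belongs to and, for post events, the identifier of the posted message. -/
structure REvent : Type where
  lbl : EventLabel
  mid : ℕ
  posted : ℕ

/-- Small-step transitions of event-driven programs, labelled by events. -/
inductive Step : Config → REvent → Config → Prop where
  | read (c : Config) (h mid x : ℕ) (rest : Msg) :
      c.cur h = some (mid, .read x :: rest) →
      Step c ⟨.read h x, mid, 0⟩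
        { c with cur := Function.update c.cur h (some (mid, rest)) }
  | write (c : Config) (h mid x v : ℕ) (rest : Msg) :
      c.cur h = some (mid, .write x v :: rest) →
      Step c ⟨.write h x v, mid, 0⟩
        { c with mem := Function.update c.mem x v,
                 cur := Function.update c.cur h (some (mid, rest)) }
  | post (c : Config) (h mid h' : ℕ) (m : Msg) (rest : Msg) :
      c.cur h = some (mid, .post h' m :: rest) →
      Step c ⟨.post h h', mid, c.fresh⟩
        { c with cur := Function.update c.cur h (some (mid, rest)),
                 mbox := Function.update c.mbox h' (c.mbox h' ++ [(c.fresh, m)]),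
                 fresh := c.fresh + 1 }
  | get (c : Config) (h mid mid' : ℕ) (m : Msg) (q : List (ℕ × Msg)) :
      c.cur h = some (mid, []) →
      c.mbox h = (mid', m) :: q →
      Step c ⟨.get h, mid', 0⟩
        { c with cur := Function.update c.cur h (some (mid', m)),
                 mbox := Function.update c.mbox h q }

/-- The initial configuration of a program: all variables 0, every handler
executing its initial message, all mailboxes empty. -/
def initConfig (P : Program) : Config where
  mem := fun _ => 0
  cur := fun h => if h < P.numHandlers then some (h, P.init h) else none
  mbox := fun _ => []
  fresh := P.numHandlers

/-- Multi-step executions producing a sequence of events. -/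
inductive Steps : Config → List REvent → Config → Prop where
  | nil (c : Config) : Steps c [] c
  | cons {c c' c'' : Config} {e : REvent} {l : List REvent} :
      Step c e c' → Steps c' l c'' → Steps c (e :: l) c''

/-- `ρ` is an execution of the program `P`. -/
def IsExec (P : Program) (ρ : List REvent) : Prop :=
  ∃ c, Steps (initConfig P) ρ c

/-- The event of `ρ` at position `i`. -/
def evAt (ρ : List REvent) (i : ℕ) : REvent := ρ.getD i ⟨.get 0, 0, 0⟩

/-- The trace `τ(ρ)` induced by an execution `ρ`: events are the positions of
`ρ`, and the relations `po, rf, co, pb, mo, eo` are determined by the order of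
execution in `ρ`. -/
def traceOf (ρ : List REvent) : EDTrace where
  E := Finset.range ρ.length
  lbl := fun i => (evAt ρ i).lbl
  rel := fun r a b =>
    a < b ∧ b < ρ.length ∧
    match r with
    | .po => (evAt ρ a).mid = (evAt ρ b).mid
    | .rf => ∃ x, (evAt ρ a).lbl.IsWriteTo x ∧ (evAt ρ b).lbl.IsReadOf x ∧
        ∀ j, a < j → j < b → ¬ (evAt ρ j).lbl.IsWriteTo x
    | .co => ∃ x, (evAt ρ a).lbl.IsWriteTo x ∧ (evAt ρ b).lbl.IsWriteTo x
    | .pb => (evAt ρ a).lbl.IsPost ∧ (evAt ρ b).lbl.IsGet ∧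
        (evAt ρ a).posted = (evAt ρ b).mid
    | .mo => ∃ h', (evAt ρ a).lbl.PostsTo h' ∧ (evAt ρ b).lbl.PostsTo h'
    | .eo => ∃ h, (evAt ρ a).lbl = .get h ∧ (evAt ρ b).lbl = .get h

namespace EDProof

/-! ### Boolean classifiers and bookkeeping lists -/

def isPostB (e : REvent) : Bool := match e.lbl with | .post _ _ => true | _ => false
def isPostToB (h' : ℕ) (e : REvent) : Bool :=
  match e.lbl with | .post _ k => k == h' | _ => false
def isGetB (h : ℕ) (e : REvent) : Bool := e.lbl == .get h

theorem isPostToB_isPostB {h' : ℕ} {e : REvent} (h : isPostToB h' e = true) : isPostB e = true := by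
  rcases e with ⟨lbl, mid, posted⟩
  unfold isPostToB at h; unfold isPostB
  cases lbl <;> simp_all

theorem isPostToB_lbl {h' : ℕ} {e : REvent} (h : isPostToB h' e = true) :
    ∃ g, e.lbl = .post g h' := by
  rcases e with ⟨lbl, mid, posted⟩
  unfold isPostToB at h
  cases lbl <;> simp_all

theorem isGetB_lbl {h : ℕ} {e : REvent} (hh : isGetB h e = true) : e.lbl = .get h := by
  unfold isGetB at hh; simpa using hh

/-- all posted message ids of posts in `l`, in order. -/
def gPosted (l : List REvent) : List ℕ := (l.filter isPostB).map (·.posted)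
/-- posted ids of posts to handler `h'` in `l`, in order. -/
def postedIds (l : List REvent) (h' : ℕ) : List ℕ := (l.filter (isPostToB h')).map (·.posted)
/-- mids of gets of handler `h` in `l`, in order. -/
def gotIds (l : List REvent) (h : ℕ) : List ℕ := (l.filter (isGetB h)).map (·.mid)

theorem gPosted_append (l l' : List REvent) : gPosted (l ++ l') = gPosted l ++ gPosted l' := by
  simp [gPosted, List.filter_append]
theorem postedIds_append (l l' : List REvent) (h : ℕ) :
    postedIds (l ++ l') h = postedIds l h ++ postedIds l' h := by
  simp [postedIds, List.filter_append]
theorem gotIds_append (l l' : List REvent) (h : ℕ) :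
    gotIds (l ++ l') h = gotIds l h ++ gotIds l' h := by
  simp [gotIds, List.filter_append]

theorem postedIds_sublist (l : List REvent) (h : ℕ) :
    List.Sublist (postedIds l h) (gPosted l) :=
  (List.monotone_filter_right l (fun _ => isPostToB_isPostB)).map _

/-- `m` is the mid of the current message of handler `h` after history `l`. -/
def IsCurMid (l : List REvent) (h m : ℕ) : Prop :=
  (m = h ∧ ∀ e ∈ l, e.lbl ≠ .get h) ∨
  ∃ l₁ e l₂, l = l₁ ++ e :: l₂ ∧ e.lbl = .get h ∧ e.mid = m ∧ ∀ e' ∈ l₂, e'.lbl ≠ .get h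

theorem IsCurMid.snoc {l : List REvent} {h m : ℕ} {e : REvent} (he : e.lbl ≠ .get h)
    (hc : IsCurMid l h m) : IsCurMid (l ++ [e]) h m := by
  rcases hc with ⟨rfl, hall⟩ | ⟨l₁, e', l₂, rfl, h1, h2, h3⟩
  · refine Or.inl ⟨rfl, fun e' he' => ?_⟩
    rcases List.mem_append.mp he' with h' | h'
    · exact hall e' h'
    · simpa [List.mem_singleton.mp h'] using he
  · refine Or.inr ⟨l₁, e', l₂ ++ [e], by simp, h1, h2, fun e'' he'' => ?_⟩
    rcases List.mem_append.mp he'' with h' | h'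
    · exact h3 e'' h'
    · simpa [List.mem_singleton.mp h'] using he

/-- The key reachability invariant. -/
structure Inv (P : Program) (l : List REvent) (c : Config) : Prop where
  fresh_ge : P.numHandlers ≤ c.fresh
  cur : ∀ h m rest, c.cur h = some (m, rest) → h < P.numHandlers ∧ IsCurMid l h m
  mbox : ∀ h, gotIds l h ++ (c.mbox h).map Prod.fst = postedIds l h
  posted_lt : ∀ v ∈ gPosted l, P.numHandlers ≤ v ∧ v < c.fresh
  posted_sorted : (gPosted l).Pairwise (· < ·)

theorem inv_init (P : Program) : Inv P [] (initConfig P) := by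
  refine ⟨le_refl _, ?_, ?_, ?_, ?_⟩
  · intro h m rest hc
    simp only [initConfig] at hc
    split at hc
    · next hlt =>
      exact ⟨hlt, Or.inl ⟨((Prod.ext_iff.mp (Option.some.inj hc)).1).symm, by simp⟩⟩
    · simp at hc
  · intro h; simp [gotIds, postedIds, initConfig]
  · intro v hv; simp [gPosted] at hv
  · simp [gPosted]

theorem inv_step {P : Program} {l : List REvent} {c c' : Config} {e : REvent}
    (inv : Inv P l c) (st : Step c e c') : Inv P (l ++ [e]) c' := by
  cases st with
  | read h mid x rest hcur =>
    have hg : gPosted (l ++ [⟨.read h x, mid, 0⟩]) = gPosted l := by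
      simp [gPosted, List.filter_append, isPostB]
    refine ⟨inv.fresh_ge, ?_, ?_, ?_, ?_⟩
    · intro h0 m r hc
      dsimp only at hc
      by_cases hh : h0 = h
      · subst hh
        rw [Function.update_self] at hc
        obtain ⟨rfl, rfl⟩ := Prod.mk.injEq .. ▸ Option.some.inj hc
        obtain ⟨h1, h2⟩ := inv.cur h0 mid (Instr.read x :: rest) hcur
        exact ⟨h1, h2.snoc (by simp)⟩
      · rw [Function.update_of_ne hh] at hc
        obtain ⟨h1, h2⟩ := inv.cur h0 m r hc
        exact ⟨h1, h2.snoc (by simp)⟩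
    · intro h0
      have : gotIds (l ++ [⟨.read h x, mid, 0⟩]) h0 = gotIds l h0 := by
        simp [gotIds, List.filter_append, isGetB]
      have hp : postedIds (l ++ [⟨.read h x, mid, 0⟩]) h0 = postedIds l h0 := by
        simp [postedIds, List.filter_append, isPostToB]
      dsimp only
      rw [this, hp]; exact inv.mbox h0
    · rw [hg]; exact inv.posted_lt
    · rw [hg]; exact inv.posted_sorted
  | write h mid x v rest hcur =>
    have hg : gPosted (l ++ [⟨.write h x v, mid, 0⟩]) = gPosted l := by
      simp [gPosted, List.filter_append, isPostB]
    refine ⟨inv.fresh_ge, ?_, ?_, ?_, ?_⟩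
    · intro h0 m r hc
      dsimp only at hc
      by_cases hh : h0 = h
      · subst hh
        rw [Function.update_self] at hc
        obtain ⟨rfl, rfl⟩ := Prod.mk.injEq .. ▸ Option.some.inj hc
        obtain ⟨h1, h2⟩ := inv.cur h0 mid (Instr.write x v :: rest) hcur
        exact ⟨h1, h2.snoc (by simp)⟩
      · rw [Function.update_of_ne hh] at hc
        obtain ⟨h1, h2⟩ := inv.cur h0 m r hc
        exact ⟨h1, h2.snoc (by simp)⟩
    · intro h0
      have : gotIds (l ++ [⟨.write h x v, mid, 0⟩]) h0 = gotIds l h0 := by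
        simp [gotIds, List.filter_append, isGetB]
      have hp : postedIds (l ++ [⟨.write h x v, mid, 0⟩]) h0 = postedIds l h0 := by
        simp [postedIds, List.filter_append, isPostToB]
      dsimp only
      rw [this, hp]; exact inv.mbox h0
    · rw [hg]; exact inv.posted_lt
    · rw [hg]; exact inv.posted_sorted
  | post h mid h' m rest hcur =>
    have hg : gPosted (l ++ [⟨.post h h', mid, c.fresh⟩]) = gPosted l ++ [c.fresh] := by
      simp [gPosted, List.filter_append, isPostB]
      exact ⟨_, rfl, rfl⟩
    refine ⟨le_trans inv.fresh_ge (Nat.le_succ _), ?_, ?_, ?_, ?_⟩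
    · intro h0 m0 r hc
      dsimp only at hc
      by_cases hh : h0 = h
      · subst hh
        rw [Function.update_self] at hc
        obtain ⟨rfl, rfl⟩ := Prod.mk.injEq .. ▸ Option.some.inj hc
        obtain ⟨h1, h2⟩ := inv.cur h0 mid (Instr.post h' m :: rest) hcur
        exact ⟨h1, h2.snoc (by simp)⟩
      · rw [Function.update_of_ne hh] at hc
        obtain ⟨h1, h2⟩ := inv.cur h0 m0 r hc
        exact ⟨h1, h2.snoc (by simp)⟩
    · intro h0
      have hgot : gotIds (l ++ [⟨.post h h', mid, c.fresh⟩]) h0 = gotIds l h0 := by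
        simp [gotIds, List.filter_append, isGetB]
      by_cases hh : h0 = h'
      · subst hh
        have hp : postedIds (l ++ [⟨.post h h0, mid, c.fresh⟩]) h0
            = postedIds l h0 ++ [c.fresh] := by
          simp [postedIds, List.filter_append, isPostToB]
        rw [hgot, hp]
        dsimp only
        simp only [Function.update_self, List.map_append]
        rw [← List.append_assoc, inv.mbox h0]
        simp
      · have hp : postedIds (l ++ [⟨.post h h', mid, c.fresh⟩]) h0 = postedIds l h0 := by
          simp [postedIds, List.filter_append, isPostToB, Ne.symm hh]
        rw [hgot, hp]
        dsimp only
        rw [Function.update_of_ne hh]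
        exact inv.mbox h0
    · rw [hg]
      intro v hv
      rcases List.mem_append.mp hv with hv | hv
      · obtain ⟨h1, h2⟩ := inv.posted_lt v hv
        exact ⟨h1, Nat.lt_succ_of_lt h2⟩
      · rw [List.mem_singleton.mp hv]
        exact ⟨inv.fresh_ge, Nat.lt_succ_self _⟩
    · rw [hg]
      rw [List.pairwise_append]
      exact ⟨inv.posted_sorted, List.pairwise_singleton _ _,
        fun x hx y hy => (List.mem_singleton.mp hy) ▸ (inv.posted_lt x hx).2⟩
  | get h mid mid' m q hcur hmb =>
    have hg : gPosted (l ++ [⟨.get h, mid', 0⟩]) = gPosted l := by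
      simp [gPosted, List.filter_append, isPostB]
    refine ⟨inv.fresh_ge, ?_, ?_, ?_, ?_⟩
    · intro h0 m0 r hc
      dsimp only at hc
      by_cases hh : h0 = h
      · subst hh
        rw [Function.update_self] at hc
        obtain ⟨rfl, rfl⟩ := Prod.mk.injEq .. ▸ Option.some.inj hc
        obtain ⟨h1, _⟩ := inv.cur h0 mid [] hcur
        exact ⟨h1, Or.inr ⟨l, ⟨.get h0, mid', 0⟩, [], rfl, rfl, rfl, by simp⟩⟩
      · rw [Function.update_of_ne hh] at hc
        obtain ⟨h1, h2⟩ := inv.cur h0 m0 r hc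
        refine ⟨h1, h2.snoc ?_⟩
        simp only [ne_eq, EventLabel.get.injEq]
        exact fun hle => hh (hle ▸ rfl)
    · intro h0
      have hp : postedIds (l ++ [⟨.get h, mid', 0⟩]) h0 = postedIds l h0 := by
        simp [postedIds, List.filter_append, isPostToB]
      rw [hp]
      by_cases hh : h0 = h
      · subst hh
        have hgot : gotIds (l ++ [⟨.get h0, mid', 0⟩]) h0 = gotIds l h0 ++ [mid'] := by
          simp [gotIds, List.filter_append, isGetB]
        dsimp only
        rw [hgot, Function.update_self]
        have := inv.mbox h0
        rw [hmb] at this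
        simpa [List.append_assoc] using this
      · have hgot : gotIds (l ++ [⟨.get h, mid', 0⟩]) h0 = gotIds l h0 := by
          simp only [gotIds, List.filter_append, List.map_append]
          have : isGetB h0 (⟨.get h, mid', 0⟩ : REvent) = false := by
            simp only [isGetB, beq_eq_false_iff_ne, ne_eq, EventLabel.get.injEq]
            exact fun hle => hh (hle ▸ rfl)
          simp [this]
        dsimp only
        rw [hgot, Function.update_of_ne hh]
        exact inv.mbox h0
    · rw [hg]; exact inv.posted_lt
    · rw [hg]; exact inv.posted_sorted

theorem inv_steps {P : Program} {c c' : Config} {l₀ l : List REvent}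
    (inv : Inv P l₀ c) (hs : Steps c l c') : Inv P (l₀ ++ l) c' := by
  induction hs generalizing l₀ with
  | nil c => simpa using inv
  | cons st hs ih =>
    rename_i c₁ c₂ c₃ e l'
    have := ih (inv_step inv st)
    simpa using this

theorem inv_exec {P : Program} {ρ : List REvent} {c : Config}
    (hs : Steps (initConfig P) ρ c) : Inv P ρ c := by
  simpa using inv_steps (inv_init P) hs

theorem fresh_mono_step {c c' : Config} {e : REvent} (st : Step c e c') :
    c.fresh ≤ c'.fresh := by
  cases st <;> simp [Nat.le_succ]

theorem fresh_mono_steps {c c' : Config} {l : List REvent} (hs : Steps c l c') :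
    c.fresh ≤ c'.fresh := by
  induction hs with
  | nil _ => exact le_refl _
  | cons st _ ih => exact le_trans (fresh_mono_step st) ih

theorem steps_split {c₀ c : Config} {l : List REvent} (hs : Steps c₀ l c) :
    ∀ i < l.length, ∃ c₁ c₂, Steps c₀ (l.take i) c₁ ∧ Step c₁ (evAt l i) c₂ ∧
      Steps c₂ (l.drop (i + 1)) c := by
  induction hs with
  | nil _ => intro i hi; simp at hi
  | cons st hs ih =>
    rename_i c₁ c₂ c₃ e l'
    intro i hi
    cases i with
    | zero => exact ⟨c₁, c₂, Steps.nil _, by simpa [evAt] using st, by simpa using hs⟩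
    | succ j =>
      obtain ⟨d₁, d₂, h1, h2, h3⟩ := ih j (by simpa using Nat.lt_of_succ_lt_succ hi)
      exact ⟨d₁, d₂, Steps.cons st h1, by simpa [evAt] using h2, by simpa using h3⟩

/-- Inversion: a post event's posted id is the fresh counter before the step. -/
theorem step_post_posted {c c' : Config} {e : REvent} (st : Step c e c')
    (he : e.lbl.IsPost) : e.posted = c.fresh := by
  cases st <;> simp [EventLabel.IsPost] at he ⊢

theorem step_post_fresh {c c' : Config} {e : REvent} (st : Step c e c')
    (he : e.lbl.IsPost) : c'.fresh = c.fresh + 1 := by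
  cases st <;> simp [EventLabel.IsPost] at he ⊢

/-- Inversion: a get event of handler `h` dequeues the head of `h`'s mailbox. -/
theorem step_get_mbox {c c' : Config} {e : REvent} {h : ℕ} (st : Step c e c')
    (he : e.lbl = .get h) : ∃ m q, c.mbox h = (e.mid, m) :: q := by
  cases st with
  | read _ _ _ _ hcur => simp at he
  | write _ _ _ _ _ hcur => simp at he
  | post _ _ _ _ _ hcur => simp at he
  | get h' mid mid' m q hcur hmb =>
    simp only [REvent.mk.injEq] at he ⊢
    obtain rfl : h' = h := by simpa using he
    exact ⟨m, q, hmb⟩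

/-- Inversion: a non-get event executes from the current message of its handler. -/
theorem step_nonget_cur {c c' : Config} {e : REvent} (st : Step c e c')
    (he : ¬ e.lbl.IsGet) : ∃ ms, c.cur e.lbl.hnd = some (e.mid, ms) := by
  cases st with
  | read h mid x rest hcur => exact ⟨_, hcur⟩
  | write h mid x v rest hcur => exact ⟨_, hcur⟩
  | post h mid h' m rest hcur => exact ⟨_, hcur⟩
  | get h mid mid' m q hcur hmb => exact absurd ⟨_, rfl⟩ he

theorem evAt_mem {ρ : List REvent} {i : ℕ} (hi : i < ρ.length) : evAt ρ i ∈ ρ := by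
  rw [evAt, List.getD_eq_getElem ρ _ hi]
  exact List.getElem_mem _

theorem evAt_take {ρ : List REvent} {i j : ℕ} (hij : i < j) :
    evAt (ρ.take j) i = evAt ρ i := by
  simp [evAt, List.getD_eq_getElem?_getD, List.getElem?_take, hij]

theorem mem_gotIds {ρ : List REvent} {i h : ℕ} (hi : i < ρ.length)
    (hl : (evAt ρ i).lbl = .get h) : (evAt ρ i).mid ∈ gotIds ρ h := by
  exact List.mem_map_of_mem (List.mem_filter.mpr ⟨evAt_mem hi, by simp [isGetB, hl]⟩)

theorem mem_postedIds {ρ : List REvent} {i g h' : ℕ} (hi : i < ρ.length)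
    (hl : (evAt ρ i).lbl = .post g h') : (evAt ρ i).posted ∈ postedIds ρ h' := by
  exact List.mem_map_of_mem (List.mem_filter.mpr ⟨evAt_mem hi, by simp [isPostToB, hl]⟩)

section Facts

variable {P : Program} {ρ : List REvent} {c : Config}

theorem gotIds_subset (hs : Steps (initConfig P) ρ c) (h : ℕ) : gotIds ρ h ⊆ postedIds ρ h := fun v hv =>
  ((inv_exec hs).mbox h) ▸ List.mem_append_left _ hv

theorem postedIds_pairwise (hs : Steps (initConfig P) ρ c) (h : ℕ) : (postedIds ρ h).Pairwise (· < ·) :=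
  (inv_exec hs).posted_sorted.sublist (postedIds_sublist ρ h)

theorem posted_handler_unique (hs : Steps (initConfig P) ρ c) {v h₁ h₂ : ℕ} (h1 : v ∈ postedIds ρ h₁)
    (h2 : v ∈ postedIds ρ h₂) : h₁ = h₂ := by
  have hnd : (gPosted ρ).Nodup :=
    (inv_exec hs).posted_sorted.imp (fun hl => Nat.ne_of_lt hl)
  obtain ⟨e₁, he₁, hv₁⟩ := List.mem_map.mp h1
  obtain ⟨e₂, he₂, hv₂⟩ := List.mem_map.mp h2
  have m₁ := List.mem_filter.mp he₁
  have m₂ := List.mem_filter.mp he₂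
  have e₁' : e₁ ∈ ρ.filter isPostB :=
    List.mem_filter.mpr ⟨m₁.1, isPostToB_isPostB m₁.2⟩
  have e₂' : e₂ ∈ ρ.filter isPostB :=
    List.mem_filter.mpr ⟨m₂.1, isPostToB_isPostB m₂.2⟩
  have : e₁ = e₂ := List.inj_on_of_nodup_map hnd e₁' e₂' (by rw [hv₁, hv₂])
  subst this
  obtain ⟨g₁, hg₁⟩ := isPostToB_lbl m₁.2
  obtain ⟨g₂, hg₂⟩ := isPostToB_lbl m₂.2
  rw [hg₁] at hg₂
  exact (EventLabel.post.injEq .. ▸ hg₂).2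

theorem getmid_ge (hs : Steps (initConfig P) ρ c) {i h : ℕ} (hi : i < ρ.length) (hl : (evAt ρ i).lbl = .get h) :
    P.numHandlers ≤ (evAt ρ i).mid := by
  have hmem : (evAt ρ i).mid ∈ postedIds ρ h := gotIds_subset hs h (mem_gotIds hi hl)
  have : (evAt ρ i).mid ∈ gPosted ρ := (postedIds_sublist ρ h).subset hmem
  exact ((inv_exec hs).posted_lt _ this).1

/-- Posted ids strictly increase along the execution. -/
theorem posted_lt_posted (hs : Steps (initConfig P) ρ c) {p q : ℕ} (hpq : p < q) (hq : q < ρ.length)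
    (hp' : (evAt ρ p).lbl.IsPost) (hq' : (evAt ρ q).lbl.IsPost) :
    (evAt ρ p).posted < (evAt ρ q).posted := by
  obtain ⟨c₃, c₄, hs₃, st₄, _⟩ := steps_split hs q hq
  have hlen : p < (ρ.take q).length := by
    rw [List.length_take]; exact lt_min hpq (lt_trans hpq hq)
  obtain ⟨c₁, c₂, hs₁, st₂, hs₂⟩ := steps_split hs₃ p hlen
  rw [evAt_take hpq] at st₂
  have h1 : (evAt ρ p).posted = c₁.fresh := step_post_posted st₂ hp'
  have h2 : (evAt ρ q).posted = c₃.fresh := step_post_posted st₄ hq'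
  have h3 : c₂.fresh ≤ c₃.fresh := fresh_mono_steps hs₂
  have h4 : c₂.fresh = c₁.fresh + 1 := step_post_fresh st₂ hp'
  omega

/-- Mids of gets of the same handler strictly increase along the execution. -/
theorem getmid_lt_getmid (hs : Steps (initConfig P) ρ c) {i j h : ℕ} (hij : i < j) (hj : j < ρ.length)
    (hi' : (evAt ρ i).lbl = .get h) (hj' : (evAt ρ j).lbl = .get h) :
    (evAt ρ i).mid < (evAt ρ j).mid := by
  obtain ⟨c₁, c₂, hs₁, st₂, _⟩ := steps_split hs j hj
  have inv := inv_exec hs₁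
  obtain ⟨m, q, hmb⟩ := step_get_mbox st₂ hj'
  have hpair : (gotIds (ρ.take j) h ++ (c₁.mbox h).map Prod.fst).Pairwise (· < ·) := by
    rw [inv.mbox h]
    exact inv.posted_sorted.sublist (postedIds_sublist _ h)
  have hmem₁ : (evAt ρ i).mid ∈ gotIds (ρ.take j) h := by
    have : i < (ρ.take j).length := by
      rw [List.length_take]; exact lt_min hij (lt_trans hij hj)
    have := mem_gotIds this (by rw [evAt_take hij]; exact hi')
    rwa [evAt_take hij] at this
  have hmem₂ : (evAt ρ j).mid ∈ (c₁.mbox h).map Prod.fst := by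
    rw [hmb]; simp
  exact (List.pairwise_append.mp hpair).2.2 _ hmem₁ _ hmem₂

/-- Gets have pairwise distinct mids. -/
theorem getmid_inj (hs : Steps (initConfig P) ρ c) {i j h₁ h₂ : ℕ} (hi : i < ρ.length) (hj : j < ρ.length)
    (hi' : (evAt ρ i).lbl = .get h₁) (hj' : (evAt ρ j).lbl = .get h₂)
    (hm : (evAt ρ i).mid = (evAt ρ j).mid) : i = j := by
  have hh : h₁ = h₂ := by
    refine posted_handler_unique hs (gotIds_subset hs h₁ (mem_gotIds hi hi')) ?_
    rw [hm]
    exact gotIds_subset hs h₂ (mem_gotIds hj hj')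
  subst hh
  rcases Nat.lt_trichotomy i j with hlt | heq | hgt
  · exact absurd hm (Nat.ne_of_lt (getmid_lt_getmid hs hlt hj hi' hj'))
  · exact heq
  · exact absurd hm.symm (Nat.ne_of_lt (getmid_lt_getmid hs hgt hi hj' hi'))

/-- A non-get event has the current mid of its handler. -/
theorem nonget_curmid (hs : Steps (initConfig P) ρ c) {i : ℕ} (hi : i < ρ.length) (hng : ¬ (evAt ρ i).lbl.IsGet) :
    (evAt ρ i).lbl.hnd < P.numHandlers ∧
    IsCurMid (ρ.take i) (evAt ρ i).lbl.hnd (evAt ρ i).mid := by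
  obtain ⟨c₁, c₂, hs₁, st₂, _⟩ := steps_split hs i hi
  obtain ⟨ms, hcur⟩ := step_nonget_cur st₂ hng
  exact (inv_exec hs₁).cur _ _ _ hcur

end Facts

theorem writeTo_var_eq {l : EventLabel} {x y : ℕ} (hx : l.IsWriteTo x)
    (hy : l.IsWriteTo y) : x = y := by
  obtain ⟨h, v, rfl⟩ := hx
  obtain ⟨h', v', he⟩ := hy
  exact ((EventLabel.write.injEq ..).mp he).2.1

theorem po_rtc {ρ : List REvent} {g x : ℕ}
    (h : Relation.ReflTransGen ((traceOf ρ).rel .po) g x) :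
    g ≤ x ∧ (x = g ∨ (x < ρ.length ∧ (evAt ρ x).mid = (evAt ρ g).mid)) := by
  induction h with
  | refl => exact ⟨le_refl _, Or.inl rfl⟩
  | tail h' hstep ih =>
    obtain ⟨hlt, hlen, hmid⟩ := hstep
    refine ⟨le_trans ih.1 (Nat.le_of_lt hlt), Or.inr ⟨hlen, ?_⟩⟩
    rcases ih.2 with rfl | ⟨_, hmid'⟩
    · exact hmid.symm
    · exact hmid.symm.trans hmid'

section Main

variable {P : Program} {ρ : List REvent} {c : Config}

theorem eoDag_lt' (hs : Steps (initConfig P) ρ c) {a b : ℕ}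
    (h : (traceOf ρ).eoDag a b) : a < b := by
  obtain ⟨g, g', ⟨_, hpo⟩, ⟨_, hpo'⟩, heo⟩ := h
  obtain ⟨hgg', hg'len, hh, hlblg, hlblg'⟩ := heo
  have hglen : g < ρ.length := lt_trans hgg' hg'len
  have hb : g' ≤ b := (po_rtc hpo').1
  rcases (po_rtc hpo).2 with rfl | ⟨halen, hamid⟩
  · exact lt_of_lt_of_le hgg' hb
  · have hga : g ≤ a := (po_rtc hpo).1
    -- a is not a get distinct from g
    have hag : g < a ∨ a = g := by
      rcases Nat.lt_or_ge g a with h' | h'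
      · exact Or.inl h'
      · exact Or.inr (le_antisymm (le_of_not_gt (fun hh' => absurd (le_antisymm h' hga)
          (fun _ => Nat.lt_irrefl _ (lt_of_le_of_lt h' hh')))) hga)
    rcases hag with hag | rfl
    swap
    · exact lt_of_lt_of_le hgg' hb
    -- now g < a
    refine lt_of_lt_of_le ?_ hb
    -- show a < g'
    by_cases hget : (evAt ρ a).lbl.IsGet
    · obtain ⟨ha, hlbla⟩ := hget
      exact absurd (getmid_inj hs halen hglen hlbla hlblg hamid) (Nat.ne_of_gt hag)
    · obtain ⟨hhnd, hcm⟩ := nonget_curmid hs halen hget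
      have hge : P.numHandlers ≤ (evAt ρ g).mid := getmid_ge hs hglen hlblg
      rcases hcm with ⟨heq, _⟩ | ⟨l₁, ev, l₂, hdec, hevlbl, hevmid, hnone⟩
      · rw [← hamid, heq] at hge
        exact absurd hhnd (not_lt_of_ge hge)
      · set k := l₁.length with hk
        have hlentake : (ρ.take a).length = a := by
          rw [List.length_take]; exact min_eq_left (le_of_lt halen)
        have hka : k < a := by
          have := congrArg List.length hdec
          rw [hlentake] at this
          simp [hk] at this
          omega
        have hevk : evAt ρ k = ev := by
          rw [← evAt_take hka, hdec, evAt, List.getD_eq_getElem?_getD,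
            List.getElem?_append_right (le_of_eq hk.symm)]
          simp [hk]
        have hkg : k = g := by
          refine getmid_inj (h₁ := (evAt ρ a).lbl.hnd) (h₂ := hh) hs
            (lt_trans hka halen) hglen ?_ hlblg ?_
          · rw [hevk]; exact hevlbl
          · rw [hevk, hevmid, hamid]
        have hhndh : (evAt ρ a).lbl.hnd = hh := by
          rw [hkg] at hevk
          have h5 : EventLabel.get hh = EventLabel.get ((evAt ρ a).lbl.hnd) :=
            hlblg.symm.trans (hevk ▸ hevlbl)
          exact ((EventLabel.get.injEq ..).mp h5).symm
        -- show a < g'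
        by_contra hcon
        push_neg at hcon
        have hg'a : g' < a := by
          rcases Nat.lt_or_ge g' a with h' | h'
          · exact h'
          · obtain rfl : g' = a := le_antisymm hcon h'
            exact absurd ⟨hh, hlblg'⟩ hget
        have hg'mem : evAt ρ g' ∈ l₂ := by
          have h1 : evAt (ρ.take a) g' = evAt ρ g' := evAt_take hg'a
          have h2 : k + 1 ≤ g' := by omega
          have h3 : g' - (k + 1) < l₂.length := by
            have := congrArg List.length hdec
            rw [hlentake] at this
            simp [hk] at this
            omega
          have h4 : evAt (ρ.take a) g' = l₂.getD (g' - (k+1)) ⟨.get 0, 0, 0⟩ := by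
            rw [hdec]
            simp only [evAt]
            rw [List.getD_eq_getElem?_getD, List.getD_eq_getElem?_getD]
            congr 1
            rw [List.getElem?_append_right (by omega)]
            obtain ⟨mm, hmm⟩ : ∃ mm, g' - l₁.length = mm + 1 := ⟨g' - l₁.length - 1, by omega⟩
            rw [hmm, List.getElem?_cons_succ]
            congr 1
            omega
          rw [← h1, h4, List.getD_eq_getElem _ _ h3]
          exact List.getElem_mem _
        have := hnone _ hg'mem
        rw [hlblg', hhndh] at this
        exact this rfl

theorem qo_lt (hs : Steps (initConfig P) ρ c) {a b : ℕ}
    (h : (traceOf ρ).qo a b) : a < b := by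
  obtain ⟨p, q, hpa, hqb, hmo⟩ := h
  obtain ⟨hpa1, halen, hppost, haget, hpmid⟩ := hpa
  obtain ⟨hqb1, hblen, hqpost, hbget, hqmid⟩ := hqb
  obtain ⟨hpq, hqlen, h', hp', hq'⟩ := hmo
  obtain ⟨gp, hlblp⟩ := hp'
  obtain ⟨gq, hlblq⟩ := hq'
  obtain ⟨ha, hlbla⟩ := haget
  obtain ⟨hb, hlblb⟩ := hbget
  have hplen : p < ρ.length := lt_trans hpa1 halen
  have hmema : (evAt ρ a).mid ∈ postedIds ρ h' := by
    rw [← hpmid]; exact mem_postedIds hplen hlblp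
  have hmemb : (evAt ρ b).mid ∈ postedIds ρ h' := by
    rw [← hqmid]; exact mem_postedIds hqlen hlblq
  have hha : ha = h' :=
    posted_handler_unique hs (gotIds_subset hs ha (mem_gotIds halen hlbla)) hmema
  have hhb : hb = h' :=
    posted_handler_unique hs (gotIds_subset hs hb (mem_gotIds hblen hlblb)) hmemb
  have hmidlt : (evAt ρ a).mid < (evAt ρ b).mid := by
    rw [← hpmid, ← hqmid]
    exact posted_lt_posted hs hpq hqlen ⟨_, _, hlblp⟩ ⟨_, _, hlblq⟩
  rcases Nat.lt_trichotomy a b with h1 | h1 | h1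
  · exact h1
  · subst h1; exact absurd hmidlt (lt_irrefl _)
  · have := getmid_lt_getmid hs h1 halen (hhb ▸ hlblb) (hha ▸ hlbla)
    omega

theorem step_lt (hs : Steps (initConfig P) ρ c) {a b : ℕ}
    (h : (traceOf ρ).step a b) : a < b := by
  rcases h with h | h | h | h | h | h | h | h
  · exact h.1
  · exact h.1
  · -- fr
    obtain ⟨w, hrf, hco⟩ := h
    obtain ⟨hwa, halen, x, hwx, hax, hnoint⟩ := hrf
    obtain ⟨hwb, hblen, y, hwy, hby⟩ := hco
    obtain rfl : x = y := writeTo_var_eq hwx hwy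
    rcases Nat.lt_trichotomy a b with h1 | h1 | h1
    · exact h1
    · subst h1
      obtain ⟨hh, hread⟩ := hax
      obtain ⟨hh', v', hwrite⟩ := hby
      rw [hread] at hwrite
      simp at hwrite
    · exact absurd hby (hnoint b hwb h1)
  · exact h.1
  · exact h.1
  · exact h.1
  · exact eoDag_lt' hs h
  · exact qo_lt hs h

end Main

end EDProof

/-- For every event-driven program `P` and every execution
`ρ` of `P`, the induced trace `τ(ρ)` is axiomatically consistent, i.e. the
relation `po ∪ rf ∪ fr ∪ co ∪ pb ∪ mo ∪ eo† ∪ qo` of `τ(ρ)` is acyclic. -/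
theorem statement2 (P : Program) (ρ : List REvent) (hexec : IsExec P ρ) :
    (traceOf ρ).Consistent := by
  obtain ⟨c, hs⟩ := hexec
  intro e he
  have key : ∀ a b : ℕ, (traceOf ρ).hb a b → a < b := by
    intro a b h
    induction h with
    | single h' => exact EDProof.step_lt hs h'
    | tail _ h' ih => exact lt_trans ih (EDProof.step_lt hs h')
  exact Nat.lt_irrefl e (key e e he)
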